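/- Let L : R^p → R be nonnegative with minimum value L* on a set S, and suppose at iterate θ_t ∈ S the restricted strong convexity inequality L(θ') ≥ L(θ_t) + ⟨θ'−θ_t, ∇L(θ_t)⟩ + (α/2)‖θ'−θ_t‖₂² holds for all θ' in a set B_t containing θ_{t+1} and a minimizer θ̄_{t+1} of L over B_t, and the smoothness inequality L(θ') ≤ L(θ_t) + ⟨θ'−θ_t, ∇L(θ_t)⟩ + (β/2)‖θ'−θ_t‖₂² holds for all θ', with 0 < α < β. If θ_{t+1} = θ_t − (ω/β)∇L(θ_t) with ω ∈ (0,2) and γ_t := (L(θ̄_{t+1}) − L*)/(L(θ_t) − L*) ∈ [0,1), then L(θ_{t+1}) − L* ≤ (1 − (α/β)·ω(1−γ_t)(2−ω))·(L(θ_t) − L*). -/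

import Mathlib

/-- RSC + smoothness imply a linear decrease of the excess empirical
loss under the gradient descent step θ_{t+1} = θ_t − (ω/β)∇L(θ_t). -/
theorem rsc_loss_reduction
    (p : ℕ) (L : EuclideanSpace ℝ (Fin p) → ℝ)
    (hLnonneg : ∀ θ, 0 ≤ L θ)
    (S Bt : Set (EuclideanSpace ℝ (Fin p)))
    (Lstar : ℝ) (hLstar : ∀ θ ∈ S, Lstar ≤ L θ)
    (θt θt1 θbar : EuclideanSpace ℝ (Fin p))
    (hθtS : θt ∈ S) (hθt1B : θt1 ∈ Bt) (hθbarB : θbar ∈ Bt)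
    (hθbarMin : ∀ θ' ∈ Bt, L θbar ≤ L θ')
    (α β ω : ℝ) (hα : 0 < α) (hαβ : α < β)
    (hω : 0 < ω) (hω2 : ω < 2)
    (hRSC : ∀ θ' ∈ Bt,
      L θt + (inner ℝ (θ' - θt) (gradient L θt) : ℝ) + (α / 2) * ‖θ' - θt‖ ^ 2 ≤ L θ')
    (hSmooth : ∀ θ' : EuclideanSpace ℝ (Fin p),
      L θ' ≤ L θt + (inner ℝ (θ' - θt) (gradient L θt) : ℝ) + (β / 2) * ‖θ' - θt‖ ^ 2)
    (hStep : θt1 = θt - (ω / β) • gradient L θt)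
    (hgt : Lstar < L θt)
    (γ : ℝ) (hγdef : γ = (L θbar - Lstar) / (L θt - Lstar))
    (hγ0 : 0 ≤ γ) (hγ1 : γ < 1) :
    L θt1 - Lstar ≤ (1 - (α / β) * ω * (1 - γ) * (2 - ω)) * (L θt - Lstar) := by
  set g := gradient L θt with hg
  have hβ : 0 < β := hα.trans hαβ
  have hA : 0 < L θt - Lstar := by linarith
  have hAne : L θt - Lstar ≠ 0 := ne_of_gt hA
  have hγA : L θbar - Lstar = γ * (L θt - Lstar) := by
    rw [hγdef]; field_simp
  -- smoothness at θt1
  have hd : θt1 - θt = (-(ω / β)) • g := by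
    rw [hStep]; module
  have hsm := hSmooth θt1
  rw [hd] at hsm
  have hinner : (inner ℝ ((-(ω / β)) • g) g : ℝ) = -(ω / β) * ‖g‖ ^ 2 := by
    rw [real_inner_smul_left, real_inner_self_eq_norm_sq]
  have hnorm : ‖(-(ω / β)) • g‖ ^ 2 = (ω / β) ^ 2 * ‖g‖ ^ 2 := by
    rw [norm_smul, mul_pow, Real.norm_eq_abs, sq_abs]; ring
  rw [hinner, hnorm] at hsm
  -- RSC at θbar gives lower bound on ‖g‖²
  have hrsc := hRSC θbar hθbarB
  set v := θbar - θt with hv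
  have hkey : -(‖g‖ ^ 2) / (2 * α) ≤ (inner ℝ v g : ℝ) + (α / 2) * ‖v‖ ^ 2 := by
    have h0 : (0:ℝ) ≤ ‖α • v + g‖ ^ 2 := sq_nonneg _
    have hexp : ‖α • v + g‖ ^ 2
        = α ^ 2 * ‖v‖ ^ 2 + 2 * (α * (inner ℝ v g : ℝ)) + ‖g‖ ^ 2 := by
      rw [norm_add_sq_real, real_inner_smul_left, norm_smul, mul_pow,
        Real.norm_eq_abs, sq_abs]
    rw [hexp] at h0
    rw [div_le_iff₀ (by positivity : (0:ℝ) < 2 * α)]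
    nlinarith [h0]
  rw [neg_div] at hkey
  have h1 : L θt - ‖g‖ ^ 2 / (2 * α) ≤ L θbar := by linarith
  have h2 : L θt - L θbar = (1 - γ) * (L θt - Lstar) := by linarith
  have h3 : (1 - γ) * (L θt - Lstar) ≤ ‖g‖ ^ 2 / (2 * α) := by linarith
  have hG : 2 * α * (1 - γ) * (L θt - Lstar) ≤ ‖g‖ ^ 2 := by
    calc 2 * α * (1 - γ) * (L θt - Lstar)
        = (2 * α) * ((1 - γ) * (L θt - Lstar)) := by ring
      _ ≤ (2 * α) * (‖g‖ ^ 2 / (2 * α)) :=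
          mul_le_mul_of_nonneg_left h3 (by positivity)
      _ = ‖g‖ ^ 2 := by field_simp
  -- combine
  have hc : 0 ≤ ω / β * (1 - ω / 2) := by
    have : 0 < 1 - ω / 2 := by linarith
    positivity
  have hfinal : L θt1 ≤ L θt - (ω / β) * (1 - ω / 2) * ‖g‖ ^ 2 := by
    have hβne : β ≠ 0 := ne_of_gt hβ
    have hq : (β / 2) * ((ω / β) ^ 2 * ‖g‖ ^ 2) = (ω / β) * (ω / 2) * ‖g‖ ^ 2 := by
      field_simp
    rw [hq] at hsm
    have hr : L θt + -(ω / β) * ‖g‖ ^ 2 + (ω / β) * (ω / 2) * ‖g‖ ^ 2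
        = L θt - (ω / β) * (1 - ω / 2) * ‖g‖ ^ 2 := by ring
    linarith [hsm, hr]
  have hstep2 : (ω / β) * (1 - ω / 2) * (2 * α * (1 - γ) * (L θt - Lstar))
      ≤ (ω / β) * (1 - ω / 2) * ‖g‖ ^ 2 :=
    mul_le_mul_of_nonneg_left hG hc
  have heq : (ω / β) * (1 - ω / 2) * (2 * α * (1 - γ) * (L θt - Lstar))
      = (α / β) * ω * (1 - γ) * (2 - ω) * (L θt - Lstar) := by
    field_simp
  have hrw : (1 - (α / β) * ω * (1 - γ) * (2 - ω)) * (L θt - Lstar)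
      = (L θt - Lstar) - (α / β) * ω * (1 - γ) * (2 - ω) * (L θt - Lstar) := by ring
  rw [hrw]
  linarith [hfinal, hstep2, heq]
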